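/- Let n = mk and let H ∈ ℂ^{n×n} be a unitary block upper Hessenberg matrix with k×k blocks (i.e. its k×k blocks H_{ij} satisfy H_{ij} = 0 whenever i > j+1). Let Z ∈ ℂ^{n×k}, E = [I_k; 0_{(n−k)×k}], and A = H + E Z^H. Then there exists a unitary block diagonal matrix P = diag(P₁, P₂, ..., P_m) with P₁ = I_k and each Pᵢ ∈ ℂ^{k×k} unitary, such that H̃ := P^H H P is a unitary k-upper Hessenberg matrix (entries h̃_{ij} = 0 for i > j+k) and P^H A P = (I_n + E Ẑ^H) H̃, where Ẑ^H = Z^H P H̃^H. -/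

import Mathlib

open Matrix

/-- The `n × k` matrix `E = [I_k; 0]` whose top `k × k` block is the identity. -/
def EkM (n k : ℕ) : Matrix (Fin n) (Fin k) ℂ :=
  Matrix.of fun x j => if x.1 = j.1 then 1 else 0

/-- The square `k × k` submatrix of `M` with top-left corner at (0-based) `(r, c)`. -/
def subsq {n : ℕ} (M : Matrix (Fin n) (Fin n) ℂ) (k r c : ℕ)
    (hr : r + k ≤ n) (hc : c + k ≤ n) : Matrix (Fin k) (Fin k) ℂ :=
  Matrix.of fun a b => M ⟨r + a.1, by omega⟩ ⟨c + b.1, by omega⟩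

lemma bnd_one {m k a : ℕ} (h : a + 1 ≤ m) : a * k + k ≤ m * k := by
  calc a * k + k = (a + 1) * k := by ring
    _ ≤ m * k := Nat.mul_le_mul_right _ h

lemma qr_exists {k : ℕ} (M : Matrix (Fin k) (Fin k) ℂ) :
    ∃ Q ∈ Matrix.unitaryGroup (Fin k) ℂ,
      ∀ a b : Fin k, b < a → (Q.conjTranspose * M) a b = 0 := by
  have hcard : Module.finrank ℂ (EuclideanSpace ℂ (Fin k)) = Fintype.card (Fin k) := by simp
  set f : Fin k → EuclideanSpace ℂ (Fin k) := fun i => WithLp.toLp 2 (fun j => M j i) with hf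
  set g := @InnerProductSpace.gramSchmidtOrthonormalBasis ℂ _ _ _ _ (Fin k) _ _
    (inferInstance : WellFoundedLT (Fin k)) _ _ hcard f with hg
  refine ⟨Matrix.of fun j i => g i j, ?_, ?_⟩
  · rw [Matrix.mem_unitaryGroup_iff']
    ext a b
    have horth := g.orthonormal
    rw [orthonormal_iff_ite] at horth
    have h2 := horth a b
    rw [PiLp.inner_apply] at h2
    simp only [Matrix.mul_apply, Matrix.star_apply, Matrix.star_eq_conjTranspose,
      Matrix.conjTranspose_apply, Matrix.of_apply, Matrix.one_apply]
    simpa [RCLike.inner_apply, mul_comm] using h2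
  · intro a b hba
    have h2 := @InnerProductSpace.gramSchmidtOrthonormalBasis_inv_triangular ℂ _ _ _ _ (Fin k) _ _
      (inferInstance : WellFoundedLT (Fin k)) _ _ hcard f b a hba
    rw [PiLp.inner_apply] at h2
    simp only [Matrix.mul_apply, Matrix.conjTranspose_apply, Matrix.of_apply]
    simpa [RCLike.inner_apply, hf, mul_comm, hg] using h2

noncomputable def qseq {k : ℕ} (B : ℕ → Matrix (Fin k) (Fin k) ℂ) :
    ℕ → Matrix (Fin k) (Fin k) ℂ
  | 0 => 1
  | i + 1 => (qr_exists (B i * qseq B i)).choose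

lemma qseq_mem {k : ℕ} (B : ℕ → Matrix (Fin k) (Fin k) ℂ) :
    ∀ i, qseq B i ∈ Matrix.unitaryGroup (Fin k) ℂ
  | 0 => one_mem _
  | i + 1 => (qr_exists (B i * qseq B i)).choose_spec.1

lemma qseq_tri {k : ℕ} (B : ℕ → Matrix (Fin k) (Fin k) ℂ) (i : ℕ) {a b : Fin k} (h : b < a) :
    ((qseq B (i + 1)).conjTranspose * (B i * qseq B i)) a b = 0 :=
  (qr_exists (B i * qseq B i)).choose_spec.2 a b h

lemma mul_add_div' {k : ℕ} (hk : 0 < k) (i a : ℕ) (ha : a < k) : (i * k + a) / k = i := by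
  rw [add_comm, Nat.add_mul_div_right _ _ hk, Nat.div_eq_of_lt ha, Nat.zero_add]

lemma mul_add_mod' {k : ℕ} (i a : ℕ) (ha : a < k) : (i * k + a) % k = a := by
  rw [add_comm, Nat.add_mul_mod_self_right, Nat.mod_eq_of_lt ha]

/-- block equivalence: `(a, i) ↦ i*k + a`. -/
def blkE (m k : ℕ) (hk : 0 < k) : Fin k × Fin m ≃ Fin (m * k) where
  toFun p := ⟨p.2.1 * k + p.1.1, by
    have h1 := p.1.2
    have h2 := bnd_one (k := k) p.2.2
    omega⟩
  invFun x := (⟨x.1 % k, Nat.mod_lt _ hk⟩, ⟨x.1 / k, (Nat.div_lt_iff_lt_mul hk).2 x.2⟩)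
  left_inv := by
    rintro ⟨a, i⟩
    exact Prod.ext (Fin.ext (mul_add_mod' i.1 a.1 a.2)) (Fin.ext (mul_add_div' hk i.1 a.1 a.2))
  right_inv := by
    intro x
    apply Fin.ext
    show x.1 / k * k + x.1 % k = x.1
    rw [mul_comm]
    exact Nat.div_add_mod x.1 k

lemma blkE_val {m k : ℕ} (hk : 0 < k) (p : Fin k × Fin m) :
    (blkE m k hk p).1 = p.2.1 * k + p.1.1 := rfl

lemma blkE_symm_apply {m k : ℕ} (hk : 0 < k) (x : Fin (m * k)) :
    (blkE m k hk).symm x = (⟨x.1 % k, Nat.mod_lt _ hk⟩,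
      ⟨x.1 / k, (Nat.div_lt_iff_lt_mul hk).2 x.2⟩) := rfl

lemma bd_conj_mul {k m : ℕ} (Qd : Fin m → Matrix (Fin k) (Fin k) ℂ)
    (M : Matrix (Fin k × Fin m) (Fin k × Fin m) ℂ) (c d : Fin k) (i j : Fin m) :
    ((blockDiagonal Qd).conjTranspose * M * blockDiagonal Qd) (c, i) (d, j) =
      ((Qd i).conjTranspose * (Matrix.of fun a b => M (a, i) (b, j)) * Qd j) c d := by
  simp only [Matrix.mul_apply, Matrix.conjTranspose_apply, Matrix.blockDiagonal_apply,
    Matrix.of_apply, ← Finset.univ_product_univ, Finset.sum_product]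
  simp only [apply_ite (star : ℂ → ℂ), star_zero, ite_mul, mul_ite, zero_mul, mul_zero,
    Finset.sum_ite_eq, Finset.sum_ite_eq', Finset.mem_univ, if_true]

/-- **Reduction of a perturbed unitary block Hessenberg matrix.**
Let `n = mk` and let `H` be a unitary block upper Hessenberg matrix with `k × k` blocks
(`H_{ij} = 0` for `i > j + 1`, blockwise). Let `A = H + E Z^H` with `E = [I_k; 0]`.
Then there is a unitary block diagonal matrix `P = diag(P₁, …, P_m)` with `P₁ = I_k`
and each `Pᵢ` unitary `k × k`, such that `H̃ = P^H H P` is a unitary `k`-upper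
Hessenberg matrix and `P^H A P = (I + E Ẑ^H) H̃` with `Ẑ^H = Z^H P H̃^H`. -/
theorem block_hessenberg_reduction (m k : ℕ)
    (H : Matrix (Fin (m * k)) (Fin (m * k)) ℂ)
    (hHu : H ∈ Matrix.unitaryGroup (Fin (m * k)) ℂ)
    (hH : ∀ x y : Fin (m * k), y.1 / k + 1 < x.1 / k → H x y = 0)
    (Z : Matrix (Fin (m * k)) (Fin k) ℂ)
    (A : Matrix (Fin (m * k)) (Fin (m * k)) ℂ)
    (hA : A = H + EkM (m * k) k * Z.conjTranspose) :
    ∃ P : Matrix (Fin (m * k)) (Fin (m * k)) ℂ,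
      P ∈ Matrix.unitaryGroup (Fin (m * k)) ℂ ∧
      -- `P` is block diagonal with `k × k` diagonal blocks
      (∀ x y : Fin (m * k), x.1 / k ≠ y.1 / k → P x y = 0) ∧
      -- `P₁ = I_k`
      (∀ x y : Fin (m * k), x.1 < k → y.1 < k → P x y = if x.1 = y.1 then 1 else 0) ∧
      -- each diagonal block `Pᵢ` is unitary
      (∀ i : Fin m,
        subsq P k (i.1 * k) (i.1 * k) (bnd_one (by omega)) (bnd_one (by omega))
          ∈ Matrix.unitaryGroup (Fin k) ℂ) ∧
      -- `H̃ = P^H H P` is a unitary `k`-upper Hessenberg matrix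
      P.conjTranspose * H * P ∈ Matrix.unitaryGroup (Fin (m * k)) ℂ ∧
      (∀ x y : Fin (m * k), y.1 + k < x.1 → (P.conjTranspose * H * P) x y = 0) ∧
      -- `P^H A P = (I + E Ẑ^H) H̃` with `Ẑ^H = Z^H P H̃^H`
      P.conjTranspose * A * P =
        (1 + EkM (m * k) k *
            (Z.conjTranspose * P * (P.conjTranspose * H * P).conjTranspose)) *
          (P.conjTranspose * H * P) := by
  classical
  rcases Nat.eq_zero_or_pos k with hk0 | hk
  · subst hk0
    have hempty : ∀ x : Fin (m * 0), False := fun x => absurd x.2 (by omega)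
    refine ⟨1, one_mem _, fun x y _ => (hempty x).elim, fun x y _ _ => (hempty x).elim,
      fun i => ?_, ?_, fun x y _ => (hempty x).elim, ?_⟩
    · rw [Matrix.mem_unitaryGroup_iff']
      ext a b
      exact absurd a.2 (by omega)
    · simpa using hHu
    · ext x y
      exact (hempty x).elim
  -- main case
  set e := blkE m k hk with he
  set B : ℕ → Matrix (Fin k) (Fin k) ℂ := fun i => Matrix.of fun a b =>
    if h : (i + 1) * k + a.1 < m * k ∧ i * k + b.1 < m * k then H ⟨_, h.1⟩ ⟨_, h.2⟩ else 0
    with hBdef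
  set Qd : Fin m → Matrix (Fin k) (Fin k) ℂ := fun i => qseq B i.1 with hQd
  set P : Matrix (Fin (m * k)) (Fin (m * k)) ℂ :=
    (blockDiagonal Qd).submatrix ⇑e.symm ⇑e.symm with hPdef
  have hQu : ∀ i, Qd i ∈ Matrix.unitaryGroup (Fin k) ℂ := fun i => qseq_mem B i.1
  have hBD1 : (blockDiagonal Qd).conjTranspose * blockDiagonal Qd = 1 := by
    rw [blockDiagonal_conjTranspose, ← blockDiagonal_mul]
    have hfun : (fun i => (Qd i).conjTranspose * Qd i) = (1 : Fin m → Matrix (Fin k) (Fin k) ℂ) := by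
      funext i
      have h1 := Matrix.mem_unitaryGroup_iff'.1 (hQu i)
      rwa [Matrix.star_eq_conjTranspose] at h1
    rw [hfun, blockDiagonal_one]
  have hPu : P ∈ Matrix.unitaryGroup (Fin (m * k)) ℂ := by
    rw [Matrix.mem_unitaryGroup_iff', Matrix.star_eq_conjTranspose, hPdef,
      conjTranspose_submatrix, submatrix_mul_equiv, hBD1, submatrix_one_equiv]
  have hHsub : H = ((H.submatrix ⇑e ⇑e).submatrix ⇑e.symm ⇑e.symm) := by
    ext x y
    simp [Matrix.submatrix_apply]
  have hHt : P.conjTranspose * H * P =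
      ((blockDiagonal Qd).conjTranspose * H.submatrix ⇑e ⇑e * blockDiagonal Qd).submatrix
        ⇑e.symm ⇑e.symm := by
    rw [hPdef, conjTranspose_submatrix]
    conv_lhs => rw [hHsub]
    rw [submatrix_mul_equiv, submatrix_mul_equiv]
  have hentry : ∀ x y : Fin (m * k), (P.conjTranspose * H * P) x y =
      ((Qd (e.symm x).2).conjTranspose *
        (Matrix.of fun a b => (H.submatrix ⇑e ⇑e) (a, (e.symm x).2) (b, (e.symm y).2)) *
        Qd (e.symm y).2) (e.symm x).1 (e.symm y).1 := by
    intro x y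
    rw [hHt]
    have h0 := bd_conj_mul Qd (H.submatrix ⇑e ⇑e) (e.symm x).1 (e.symm y).1
      (e.symm x).2 (e.symm y).2
    simpa using h0
  -- Hessenberg property
  have hhess : ∀ x y : Fin (m * k), y.1 + k < x.1 → (P.conjTranspose * H * P) x y = 0 := by
    intro x y hxy
    rw [hentry x y]
    rcases lt_trichotomy (x.1 / k) (y.1 / k + 1) with hlt | heq | hgt
    · exfalso
      have e1 := Nat.div_add_mod x.1 k
      have e2 := Nat.div_add_mod y.1 k
      have h3 : x.1 / k ≤ y.1 / k := by omega
      have h4 : k * (x.1 / k) ≤ k * (y.1 / k) := Nat.mul_le_mul_left k h3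
      have m1 : x.1 % k < k := Nat.mod_lt _ hk
      omega
    · -- subdiagonal block: use QR triangularity
      have hix : ((e.symm x).2 : Fin m).1 = y.1 / k + 1 := heq
      have hMB : (Matrix.of fun a b =>
          (H.submatrix ⇑e ⇑e) (a, (e.symm x).2) (b, (e.symm y).2)) = B (y.1 / k) := by
        ext a b
        show H (e (a, (e.symm x).2)) (e (b, (e.symm y).2)) = B (y.1 / k) a b
        have hb1 : (e (a, (e.symm x).2)).1 = (y.1 / k + 1) * k + a.1 := by
          rw [blkE_val]; rw [hix]
        have hb2 : (e (b, (e.symm y).2)).1 = (y.1 / k) * k + b.1 := rfl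
        have hc1 : (y.1 / k + 1) * k + a.1 < m * k := hb1 ▸ (e (a, (e.symm x).2)).2
        have hc2 : (y.1 / k) * k + b.1 < m * k := hb2 ▸ (e (b, (e.symm y).2)).2
        rw [hBdef]
        simp only [Matrix.of_apply]
        rw [dif_pos ⟨hc1, hc2⟩]
        congr 1 <;> exact Fin.ext (by assumption)
      rw [hMB]
      have hq1 : Qd (e.symm x).2 = qseq B (y.1 / k + 1) := by
        rw [hQd]
        exact congrArg (qseq B) hix
      have hq2 : Qd (e.symm y).2 = qseq B (y.1 / k) := rfl
      rw [hq1, hq2, Matrix.mul_assoc]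
      apply qseq_tri B (y.1 / k)
      -- y % k < x % k
      show ((e.symm y).1 : Fin k) < ((e.symm x).1 : Fin k)
      have e1 := Nat.div_add_mod x.1 k
      have e2 := Nat.div_add_mod y.1 k
      rw [heq, Nat.mul_succ] at e1
      show y.1 % k < x.1 % k
      omega
    · -- zero block
      have hz : (Matrix.of fun a b =>
          (H.submatrix ⇑e ⇑e) (a, (e.symm x).2) (b, (e.symm y).2)) = 0 := by
        ext a b
        show H (e (a, (e.symm x).2)) (e (b, (e.symm y).2)) = 0
        apply hH
        rw [blkE_val, blkE_val]
        rw [mul_add_div' hk _ _ a.2, mul_add_div' hk _ _ b.2]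
        exact hgt
      rw [hz, Matrix.mul_zero, Matrix.zero_mul]
      simp
  have hHtu : P.conjTranspose * H * P ∈ Matrix.unitaryGroup (Fin (m * k)) ℂ := by
    have hPc : P.conjTranspose ∈ Matrix.unitaryGroup (Fin (m * k)) ℂ := by
      rw [← Matrix.star_eq_conjTranspose]
      exact Unitary.star_mem hPu
    exact mul_mem (mul_mem hPc hHu) hPu
  have hunit : (P.conjTranspose * H * P).conjTranspose * (P.conjTranspose * H * P) = 1 := by
    have h1 := Matrix.mem_unitaryGroup_iff'.1 hHtu
    rwa [Matrix.star_eq_conjTranspose] at h1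
  have hPE : P.conjTranspose * EkM (m * k) k = EkM (m * k) k := by
    ext x j
    have hm0 : 0 < m := by
      have h2 : 0 < m * k := lt_of_le_of_lt (Nat.zero_le x.1) x.2
      by_contra h
      have hm : m = 0 := by omega
      rw [hm, Nat.zero_mul] at h2
      exact absurd h2 (lt_irrefl 0)
    have hj : (j.1 : ℕ) < m * k := lt_of_lt_of_le j.2 (by
      calc k = 1 * k := (one_mul k).symm
        _ ≤ m * k := Nat.mul_le_mul_right _ hm0)
    set j' : Fin (m * k) := ⟨j.1, hj⟩ with hj'
    rw [Matrix.mul_apply]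
    have hterm : ∀ z : Fin (m * k),
        P.conjTranspose x z * EkM (m * k) k z j =
          if z = j' then star (P j' x) else 0 := by
      intro z
      by_cases hzj : z = j'
      · subst hzj
        simp [EkM, Matrix.conjTranspose_apply, hj']
      · have hne : z.1 ≠ j.1 := by
          intro hc
          exact hzj (Fin.ext hc)
        simp [EkM, hne, hzj]
    rw [Finset.sum_congr rfl (fun z _ => hterm z), Finset.sum_ite_eq' Finset.univ j' _,
      if_pos (Finset.mem_univ _)]
    -- compute star (P j' x)
    have hPjx : P j' x = blockDiagonal Qd ((e.symm j' : Fin k × Fin m)) (e.symm x) := rfl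
    rw [hPjx, blockDiagonal_apply]
    have hjm : (j'.1 : ℕ) % k = j.1 := Nat.mod_eq_of_lt j.2
    have hjd : (j'.1 : ℕ) / k = 0 := Nat.div_eq_of_lt j.2
    by_cases hx : x.1 < k
    · have hxd : x.1 / k = 0 := Nat.div_eq_of_lt hx
      have hxm : x.1 % k = x.1 := Nat.mod_eq_of_lt hx
      rw [if_pos (by
        apply Fin.ext
        show (j'.1 : ℕ) / k = x.1 / k
        rw [hjd, hxd])]
      have hQ0 : Qd (e.symm j').2 = 1 := by
        rw [hQd]
        show qseq B ((j'.1 : ℕ) / k) = 1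
        rw [hjd]
        rfl
      rw [hQ0]
      rw [Matrix.one_apply]
      simp only [EkM, Matrix.of_apply]
      have hcond : ((e.symm j').1 = (e.symm x).1) ↔ (x.1 = j.1) := by
        constructor
        · intro hc
          have h5 : (j'.1 : ℕ) % k = x.1 % k := congrArg Fin.val hc
          rw [hjm, hxm] at h5
          exact h5.symm
        · intro hc
          apply Fin.ext
          show (j'.1 : ℕ) % k = x.1 % k
          rw [hjm, hxm, hc]
      by_cases hc : x.1 = j.1
      · rw [if_pos (hcond.2 hc), if_pos hc]
        simp
      · rw [if_neg (fun h => hc (hcond.1 h)), if_neg hc]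
        simp
    · rw [if_neg (by
        intro hc
        have := congrArg Fin.val hc
        show False
        have : (j'.1 : ℕ) / k = x.1 / k := this
        rw [hjd] at this
        have hxk : k ≤ x.1 := Nat.le_of_not_lt hx
        have := Nat.div_pos hxk hk
        omega)]
      have : EkM (m * k) k x j = 0 := by
        simp only [EkM, Matrix.of_apply]
        rw [if_neg (by intro hc; exact hx (hc ▸ j.2))]
      rw [this, star_zero]
  refine ⟨P, hPu, ?_, ?_, ?_, hHtu, hhess, ?_⟩
  · -- block diagonal
    intro x y hxy
    show blockDiagonal Qd (e.symm x) (e.symm y) = 0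
    rw [blockDiagonal_apply, if_neg]
    intro hc
    exact hxy (congrArg Fin.val hc)
  · -- P₁ = I
    intro x y hx hy
    show blockDiagonal Qd (e.symm x) (e.symm y) = _
    rw [blockDiagonal_apply]
    have hxd : x.1 / k = 0 := Nat.div_eq_of_lt hx
    have hyd : y.1 / k = 0 := Nat.div_eq_of_lt hy
    have hxm : x.1 % k = x.1 := Nat.mod_eq_of_lt hx
    have hym : y.1 % k = y.1 := Nat.mod_eq_of_lt hy
    rw [if_pos (Fin.ext (show x.1 / k = y.1 / k by rw [hxd, hyd]))]
    have hQ0 : Qd (e.symm x).2 = 1 := by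
      rw [hQd]
      show qseq B (x.1 / k) = 1
      rw [hxd]
      rfl
    rw [hQ0, Matrix.one_apply]
    by_cases hc : x.1 = y.1
    · rw [if_pos (Fin.ext (show x.1 % k = y.1 % k by rw [hxm, hym, hc])), if_pos hc]
    · rw [if_neg (fun h => hc (by
        have := congrArg Fin.val h
        show x.1 = y.1
        rw [← hxm, ← hym]
        exact this)), if_neg hc]
  · -- subsq blocks unitary
    intro i
    have hsub : subsq P k (i.1 * k) (i.1 * k) (bnd_one (by omega)) (bnd_one (by omega)) = Qd i := by
      ext a b
      simp only [subsq, Matrix.of_apply]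
      have hxa : (⟨i.1 * k + a.1, by have := bnd_one (k := k) (show i.1 + 1 ≤ m by omega); omega⟩ :
          Fin (m * k)) = e (a, i) := rfl
      show P (e (a, i)) (e (b, i)) = Qd i a b
      show blockDiagonal Qd (e.symm (e (a, i))) (e.symm (e (b, i))) = Qd i a b
      rw [Equiv.symm_apply_apply, Equiv.symm_apply_apply, blockDiagonal_apply, if_pos rfl]
    rw [hsub]
    exact hQu i
  · -- final identity
    rw [hA, Matrix.mul_add, Matrix.add_mul, Matrix.add_mul, Matrix.one_mul]
    congr 1
    have h1 : P.conjTranspose * (EkM (m * k) k * Z.conjTranspose) * P =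
        EkM (m * k) k * (Z.conjTranspose * P) := by
      rw [← Matrix.mul_assoc, ← Matrix.mul_assoc, hPE, Matrix.mul_assoc]
    have h2 : EkM (m * k) k * (Z.conjTranspose * P * (P.conjTranspose * H * P).conjTranspose) *
        (P.conjTranspose * H * P) = EkM (m * k) k * (Z.conjTranspose * P) := by
      rw [Matrix.mul_assoc (EkM (m * k) k), Matrix.mul_assoc (Z.conjTranspose * P), hunit,
        Matrix.mul_one]
    rw [h1, h2]
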